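/- For all integers n ≥ 1 and L ≥ 2 with n ≤ L ≤ 2^(n/16), the smallest positive integer b satisfying ⌊n/b⌋^b ≥ L obeys b ≤ 2·log L / log(n / log L), where logs are base 2. -/

import Mathlib

open Real

/-- Claim 1: for `1 ≤ n ≤ L ≤ 2^(n/16)`, `L ≥ 2`, the smallest positive integer `b`
with `⌊n/b⌋^b ≥ L` satisfies `b ≤ 2 log L / log(n / log L)` (logs base 2). -/
theorem stmt1 (n L : ℕ) (hn : 1 ≤ n) (hL : 2 ≤ L) (hnL : n ≤ L)
    (hLup : (L : ℝ) ≤ (2 : ℝ) ^ ((n : ℝ) / 16)) (b : ℕ)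
    (hb : IsLeast {b' : ℕ | 0 < b' ∧ L ≤ (n / b') ^ b'} b) :
    (b : ℝ) ≤ 2 * Real.logb 2 L / Real.logb 2 ((n : ℝ) / Real.logb 2 L) := by
  have h12 : (1:ℝ) < 2 := one_lt_two
  have hLpos : (0:ℝ) < L := by positivity
  have hL2 : (2:ℝ) ≤ L := by exact_mod_cast hL
  have hnpos : (0:ℝ) < n := by exact_mod_cast hn
  set ℓ := Real.logb 2 (L:ℝ) with hℓdef
  have hℓ1 : 1 ≤ ℓ := by
    have := Real.logb_le_logb_of_le h12 (by norm_num : (0:ℝ) < 2) hL2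
    simpa [Real.logb_self_eq_one h12] using this
  have hℓpos : 0 < ℓ := by linarith
  -- n ≥ 16 ℓ
  have h16 : 16 * ℓ ≤ (n:ℝ) := by
    have : ℓ ≤ (n:ℝ)/16 := by
      have := Real.logb_le_logb_of_le h12 hLpos hLup
      simpa [Real.logb_rpow (by norm_num : (0:ℝ) < 2) (by norm_num : (2:ℝ) ≠ 1)] using this
    linarith
  have hnl16 : (16:ℝ) ≤ (n:ℝ)/ℓ := by
    rw [le_div_iff₀ hℓpos]; linarith
  have hnlpos : (0:ℝ) < (n:ℝ)/ℓ := by linarith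
  set D := Real.logb 2 ((n:ℝ)/ℓ) with hDdef
  have hD4 : 4 ≤ D := by
    have : Real.logb 2 (16:ℝ) ≤ D :=
      Real.logb_le_logb_of_le h12 (by norm_num) hnl16
    have h16' : Real.logb 2 (16:ℝ) = 4 := by
      rw [show (16:ℝ) = 2^(4:ℕ) by norm_num, Real.logb_pow,
        Real.logb_self_eq_one h12]; norm_num
    linarith [h16' ▸ this]
  have hDpos : (0:ℝ) < D := by linarith
  -- ℓ ≥ D : since logb n ≤ ℓ (from n ≤ L) and n/ℓ ≤ n
  have hlogn : Real.logb 2 (n:ℝ) ≤ ℓ :=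
    Real.logb_le_logb_of_le h12 hnpos (by exact_mod_cast hnL)
  have hDℓ : D ≤ ℓ := by
    have : D ≤ Real.logb 2 (n:ℝ) := by
      apply Real.logb_le_logb_of_le h12 hnlpos
      rw [div_le_iff₀ hℓpos]; nlinarith
    linarith
  set B := 2 * ℓ / D with hBdef
  have hB2 : 2 ≤ B := by
    rw [hBdef, le_div_iff₀ hDpos]; linarith
  have h2Bℓ : 2 * B ≤ ℓ := by
    have he : 2 * B = 4 * ℓ / D := by rw [hBdef]; ring
    rw [he, div_le_iff₀ hDpos]
    nlinarith
  set b' := ⌊B⌋₊ with hb'def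
  have hb'le : (b':ℝ) ≤ B := Nat.floor_le (by linarith)
  have hb'2 : 2 ≤ b' := Nat.le_floor (by exact_mod_cast hB2)
  have hb'pos : 0 < b' := by omega
  have hb'posR : (0:ℝ) < b' := by exact_mod_cast hb'pos
  have hb'ge : B / 2 ≤ (b':ℝ) := by
    have := Nat.lt_floor_add_one B
    linarith
  -- n div b' ≥ n/ℓ  (in ℝ)
  have hdivlb : (n:ℝ)/ℓ ≤ ((n / b' : ℕ):ℝ) := by
    have hfloor : (n:ℝ)/(b':ℝ) - 1 ≤ ((n / b' : ℕ):ℝ) := by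
      have h1 : n < b' * (n / b') + b' := by
        have h2 := Nat.div_add_mod n b'
        have h3 := Nat.mod_lt n hb'pos
        omega
      have h1' : (n:ℝ) < (b':ℝ) * ((n / b' : ℕ):ℝ) + b' := by exact_mod_cast h1
      rw [sub_le_iff_le_add, div_le_iff₀ hb'posR]
      nlinarith
    have hbig : (n:ℝ)/ℓ + 1 ≤ (n:ℝ)/(b':ℝ) := by
      -- n / b' ≥ n / B ≥ 2 n / ℓ ≥ n/ℓ + 1  (since n/ℓ ≥ 16 ≥ 1... n/ℓ ≥ 1+1? use n/ℓ ≥ 16)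
      have hBpos : (0:ℝ) < B := by linarith
      have h1 : (n:ℝ)/B ≤ (n:ℝ)/(b':ℝ) :=
        div_le_div_of_nonneg_left (by positivity) hb'posR hb'le
      have h2 : 2 * ((n:ℝ)/ℓ) ≤ (n:ℝ)/B := by
        rw [le_div_iff₀ hBpos]
        have hc : (n:ℝ)/ℓ * ℓ = n := div_mul_cancel₀ _ hℓpos.ne'
        nlinarith [hnlpos]
      linarith [hnl16]
    linarith
  -- membership of b'
  have hmem : L ≤ (n / b') ^ b' := by
    have hnl1 : (1:ℝ) ≤ (n:ℝ)/ℓ := by linarith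
    have key : (L:ℝ) ≤ ((n / b' : ℕ):ℝ) ^ b' := by
      have step1 : ((n:ℝ)/ℓ) ^ b' ≤ ((n / b' : ℕ):ℝ) ^ b' :=
        pow_le_pow_left₀ (by positivity) hdivlb b'
      have step2 : (L:ℝ) ≤ ((n:ℝ)/ℓ) ^ b' := by
        have e1 : (n:ℝ)/ℓ = (2:ℝ) ^ D :=
          (Real.rpow_logb (by norm_num) (by norm_num) hnlpos).symm
        have e2 : (L:ℝ) = (2:ℝ) ^ ℓ :=
          (Real.rpow_logb (by norm_num) (by norm_num) hLpos).symm
        rw [e1, e2, ← Real.rpow_natCast ((2:ℝ)^D) b', ← Real.rpow_mul (by norm_num)]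
        apply Real.rpow_le_rpow_left_iff h12 |>.mpr
        have : D * (B/2) ≤ D * (b':ℝ) := by
          apply mul_le_mul_of_nonneg_left hb'ge (le_of_lt hDpos)
        have hBD : D * (B/2) = ℓ := by
          rw [hBdef]; field_simp
        linarith
      linarith
    exact_mod_cast key
  have hbb' : b ≤ b' := hb.2 ⟨hb'pos, hmem⟩
  calc (b:ℝ) ≤ (b':ℝ) := by exact_mod_cast hbb'
    _ ≤ B := hb'le
    _ = 2 * Real.logb 2 L / Real.logb 2 ((n : ℝ) / Real.logb 2 L) := rfl
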